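/- Let 0 < q < 1, let k be a non-negative integer, let x ∈ [0,1], and let t be a real number with |t| < 1/(1-q). Then the generating function identity for the q-Bernstein basis holds: Σ_{n=0}^∞ b_{k,n}^q(x) · t^n/[n]_q! = (x^k t^k/[k]_q!) · Σ_{n=0}^∞ (1-x)_q^n · t^n/[n]_q!, where b_{k,n}^q(x) is taken to be 0 whenever n < k. In other words, b_{k,n}^q(x) is the coefficient of t^n/[n]_q! in the expansion of (x^k t^k/[k]_q!) · e_q((1-q)(1-x)_q t), where the q-exponential factor denotes the series Σ_{n=0}^∞ (1-x)_q^n t^n/[n]_q!. -/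

import Mathlib

open Finset

/-- The q-integer `[n]_q = (1 - q^n)/(1 - q)`. -/
noncomputable def qInt (q : ℝ) (n : ℕ) : ℝ := (1 - q ^ n) / (1 - q)

/-- The q-factorial `[n]_q! = [n]_q [n-1]_q ⋯ [1]_q`, with `[0]_q! = 1`. -/
noncomputable def qFact (q : ℝ) (n : ℕ) : ℝ := ∏ i ∈ Finset.range n, qInt q (i + 1)

/-- The q-binomial coefficient `[n choose k]_q = [n]_q! / ([k]_q! [n-k]_q!)`. -/
noncomputable def qChoose (q : ℝ) (n k : ℕ) : ℝ := qFact q n / (qFact q k * qFact q (n - k))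

/-- The q-shifted product `(1 - x)_q^n = ∏_{s=0}^{n-1} (1 - q^s x)`. -/
noncomputable def qPoch (q x : ℝ) (n : ℕ) : ℝ := ∏ s ∈ Finset.range n, (1 - q ^ s * x)

/-- The q-Bernstein basis function `b_{k,n}^q(x) = [n choose k]_q x^k (1-x)_q^{n-k}`
for `k ≤ n`, taken to be `0` when `n < k`. -/
noncomputable def qBernstein (q : ℝ) (k n : ℕ) (x : ℝ) : ℝ :=
  if k ≤ n then qChoose q n k * x ^ k * qPoch q x (n - k) else 0

/-- Generating function for the q-Bernstein basis:
`Σ_{n=0}^∞ b_{k,n}^q(x) t^n/[n]_q! = (x^k t^k/[k]_q!) Σ_{n=0}^∞ (1-x)_q^n t^n/[n]_q!`. -/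
theorem qBernstein_generating_function (q : ℝ) (hq0 : 0 < q) (hq1 : q < 1)
    (k : ℕ) (x : ℝ) (hx : x ∈ Set.Icc (0 : ℝ) 1)
    (t : ℝ) (ht : |t| < 1 / (1 - q)) :
    ∑' n : ℕ, qBernstein q k n x * t ^ n / qFact q n =
      (x ^ k * t ^ k / qFact q k) * ∑' n : ℕ, qPoch q x n * t ^ n / qFact q n := by
  have hfact : ∀ n, (0:ℝ) < qFact q n := by
    intro n
    refine Finset.prod_pos fun i _ => ?_
    have h1 : q ^ (i + 1) < 1 := pow_lt_one₀ hq0.le hq1 (Nat.succ_ne_zero i)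
    exact div_pos (by linarith) (by linarith)
  have hfne : ∀ n, qFact q n ≠ 0 := fun n => (hfact n).ne'
  have hinj : Function.Injective (fun n : ℕ => n + k) := fun a b h => by simpa using h
  have hzero : ∀ n ∉ Set.range (fun n : ℕ => n + k),
      qBernstein q k n x * t ^ n / qFact q n = 0 := by
    intro n hn
    have hk : ¬ k ≤ n := by
      intro h
      exact hn ⟨n - k, by simp; omega⟩
    simp [qBernstein, hk]
  rw [← Function.Injective.tsum_eq hinj (Function.support_subset_iff'.2 hzero)]
  have hcongr : ∀ n : ℕ, qBernstein q k (n + k) x * t ^ (n + k) / qFact q (n + k) =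
      (x ^ k * t ^ k / qFact q k) * (qPoch q x n * t ^ n / qFact q n) := by
    intro n
    have hk : k ≤ n + k := Nat.le_add_left k n
    have hsub : n + k - k = n := by omega
    rw [qBernstein, if_pos hk, qChoose, hsub, pow_add]
    field_simp [hfne k, hfne n, hfne (n + k)]
    try ring
  calc ∑' n : ℕ, qBernstein q k (n + k) x * t ^ (n + k) / qFact q (n + k)
      = ∑' n : ℕ, (x ^ k * t ^ k / qFact q k) * (qPoch q x n * t ^ n / qFact q n) :=
        tsum_congr hcongr
    _ = _ := tsum_mul_left
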